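/- Any two merge trees M and N admit compatible presentations, i.e., presentations P_M and P_N whose underlying 0-1 presentation matrices are identical. -/

import Mathlib

open scoped ENNReal NNReal

/-- A persistent set: a functor `ℝ → Set`, with `ℝ` regarded as a poset category. -/
structure PersistentSet where
  obj : ℝ → Type
  map : ∀ {s t : ℝ}, s ≤ t → obj s → obj t
  map_id : ∀ (t : ℝ) (x : obj t), map (le_refl t) x = x
  map_comp : ∀ {s t u : ℝ} (h1 : s ≤ t) (h2 : t ≤ u) (x : obj s),
    map h2 (map h1 x) = map (le_trans h1 h2) x

/-- An `ε`-interleaving between persistent sets `M` and `N`. -/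
def Interleaved (M N : PersistentSet) (ε : ℝ) : Prop :=
  ∃ (hε : 0 ≤ ε) (φ : ∀ t, M.obj t → N.obj (t + ε)) (ψ : ∀ t, N.obj t → M.obj (t + ε)),
    (∀ (s t : ℝ) (h : s ≤ t) (x : M.obj s),
      φ t (M.map h x) = N.map (by linarith : s + ε ≤ t + ε) (φ s x)) ∧
    (∀ (s t : ℝ) (h : s ≤ t) (x : N.obj s),
      ψ t (N.map h x) = M.map (by linarith : s + ε ≤ t + ε) (ψ s x)) ∧
    (∀ (s : ℝ) (x : M.obj s), ψ (s + ε) (φ s x) = M.map (by linarith : s ≤ s + ε + ε) x) ∧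
    (∀ (s : ℝ) (x : N.obj s), φ (s + ε) (ψ s x) = N.map (by linarith : s ≤ s + ε + ε) x)

/-- A persistent set is constructible if it has a finite set of critical values:
it is empty before the first critical value, and the internal maps are
isomorphisms between consecutive critical values. -/
def Constructible (M : PersistentSet) : Prop :=
  ∃ τ : Finset ℝ,
    (∀ t : ℝ, (∀ s ∈ τ, t < s) → IsEmpty (M.obj t)) ∧
    (∀ (s t : ℝ) (h : s ≤ t), (∀ c ∈ τ, c ≤ s ∨ t < c) → Function.Bijective (M.map h))

/-- A merge tree: a constructible persistent set with finite values which is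
eventually a singleton. -/
structure MergeTree where
  toPS : PersistentSet
  constructible : Constructible toPS
  finite : ∀ t, Finite (toPS.obj t)
  eventually_one : ∃ T : ℝ, ∀ t, T ≤ t → (Nonempty (toPS.obj t) ∧ Subsingleton (toPS.obj t))

/-- Combinatorial data of a presentation: `k` generator strands with birth times `γ`,
`l` relation strands with birth times `ρ`, and for each relation two merge maps
`f j`, `g j` into the generators (a map of strands `R_j → G_i` exists iff
`γ i ≤ ρ j`, which is the content of `hf`, `hg`). -/
structure Pres (k l : ℕ) where
  γ : Fin k → ℝ
  ρ : Fin l → ℝ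
  f : Fin l → Fin k
  g : Fin l → Fin k
  hf : ∀ j, γ (f j) ≤ ρ j
  hg : ∀ j, γ (g j) ≤ ρ j

/-- The relation at time `t` identifying the two targets of each relation strand
born by time `t`. -/
def Pres.rel {k l : ℕ} (P : Pres k l) (t : ℝ) :
    {i : Fin k // P.γ i ≤ t} → {i : Fin k // P.γ i ≤ t} → Prop :=
  fun a b => ∃ j : Fin l, P.ρ j ≤ t ∧
    ((P.f j = a.1 ∧ P.g j = b.1) ∨ (P.f j = b.1 ∧ P.g j = a.1))

/-- The persistent set presented by `P`: the pointwise coequalizer of the pair of maps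
`⊔ⱼ Rⱼ ⇉ ⊔ᵢ Gᵢ` of disjoint unions of strands. -/
def Pres.toPS {k l : ℕ} (P : Pres k l) : PersistentSet where
  obj t := Quot (P.rel t)
  map := fun {s t} h =>
    Quot.lift (fun a => Quot.mk (P.rel t) ⟨a.1, le_trans a.2 h⟩)
      (fun a b hab => Quot.sound (by
        obtain ⟨j, hj, hc⟩ := hab
        exact ⟨j, le_trans hj h, hc⟩))
  map_id := fun t x => Quot.inductionOn x fun a => rfl
  map_comp := fun h1 h2 x => Quot.inductionOn x fun a => rfl

/-- An isomorphism of persistent sets: a natural family of bijections. -/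
structure PSIso (M N : PersistentSet) where
  hom : ∀ t, M.obj t → N.obj t
  natural : ∀ {s t : ℝ} (h : s ≤ t) (x : M.obj s), hom t (M.map h x) = N.map h (hom s x)
  bij : ∀ t, Function.Bijective (hom t)

/-- `P` is a presentation of the persistent set `M`. -/
def IsPresentation {k l : ℕ} (P : Pres k l) (M : PersistentSet) : Prop :=
  Nonempty (PSIso P.toPS M)

/-- Two presentations are compatible if their underlying 0-1 presentation matrices agree:
entry `(i,j)` is 1 iff one of the two merge maps of relation `j` lands in generator `i`. -/
def Compatible {k l : ℕ} (P Q : Pres k l) : Prop :=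
  ∀ (i : Fin k) (j : Fin l), (P.f j = i ∨ P.g j = i) ↔ (Q.f j = i ∨ Q.g j = i)

/-- The `ℓp`-norm of a finite vector of reals, `p ∈ [1,∞]`. -/
noncomputable def lpNorm (p : ℝ≥0∞) {n : ℕ} (x : Fin n → ℝ) : ℝ :=
  if p = ⊤ then ⨆ i, |x i| else (∑ i, |x i| ^ p.toReal) ^ (1 / p.toReal)

/-- The difference of the label vectors of two compatible presentations: the vector of
differences of generator birth times followed by differences of relation birth times. -/
noncomputable def labelDiff {k l : ℕ} (P Q : Pres k l) : Fin (k + l) → ℝ :=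
  Fin.append (fun i => P.γ i - Q.γ i) (fun j => P.ρ j - Q.ρ j)

/-- The `p`-presentation semi-distance between merge trees. -/
noncomputable def dHat (p : ℝ≥0∞) (M N : MergeTree) : ℝ :=
  sInf {c | ∃ (k l : ℕ) (P Q : Pres k l), Compatible P Q ∧
    IsPresentation P M.toPS ∧ IsPresentation Q N.toPS ∧
    c = lpNorm p (labelDiff P Q)}

/-- The `p`-presentation distance: the path pseudometric induced by `dHat`. -/
noncomputable def dPres (p : ℝ≥0∞) (M N : MergeTree) : ℝ :=
  sInf {c | ∃ (n : ℕ) (Z : Fin (n + 1) → MergeTree), Z 0 = M ∧ Z (Fin.last n) = N ∧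
    c = ∑ i : Fin n, dHat p (Z i.castSucc) (Z i.succ)}

/-! ### Auxiliary constructions for the proof -/

noncomputable section AuxFullPres

/-- The set of "generators" extracted from a constructible persistent set:
elements of fibers over critical values. -/
abbrev Gen (M : PersistentSet) (τ : Finset ℝ) : Type :=
  Σ c : {c : ℝ // c ∈ τ}, M.obj c.1

/-- Two generators are directly related if one maps to the other. -/
def DRel (M : PersistentSet) (τ : Finset ℝ) (g1 g2 : Gen M τ) : Prop :=
  (∃ h : (g1.1.1 : ℝ) ≤ g2.1.1, M.map h g1.2 = g2.2) ∨
  (∃ h : (g2.1.1 : ℝ) ≤ g1.1.1, M.map h g2.2 = g1.2)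

variable (M : PersistentSet) (τ : Finset ℝ) (T : ℝ) {k0 n : ℕ}
  (e0 : Fin k0 ≃ Gen M τ)

/-- Birth time of the `i`-th generator strand (a dummy strand born at `T` if `i ≥ k0`). -/
def gBirth (i : Fin n) : ℝ :=
  if h : (i : ℕ) < k0 then ((e0 ⟨(i : ℕ), h⟩).1.1 : ℝ) else T

open Classical in
/-- Birth time of the relation strand attached to the pair `p` of generator strands. -/
def rBirth (p : Fin n × Fin n) : ℝ :=
  if h : (p.1 : ℕ) < k0 ∧ (p.2 : ℕ) < k0 then
    (if DRel M τ (e0 ⟨(p.1 : ℕ), h.1⟩) (e0 ⟨(p.2 : ℕ), h.2⟩) then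
      max ((e0 ⟨(p.1 : ℕ), h.1⟩).1.1 : ℝ) ((e0 ⟨(p.2 : ℕ), h.2⟩).1.1 : ℝ)
    else T)
  else T

variable {M τ T}

lemma gBirth_le_T (hτT : ∀ c ∈ τ, c ≤ T) (i : Fin n) : gBirth M τ T e0 i ≤ T := by
  unfold gBirth
  split_ifs with h
  · exact hτT _ (e0 ⟨(i : ℕ), h⟩).1.2
  · exact le_rfl

lemma rBirth_le_T (hτT : ∀ c ∈ τ, c ≤ T) (p : Fin n × Fin n) :
    rBirth M τ T e0 p ≤ T := by
  unfold rBirth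
  split_ifs with h hd
  · exact max_le (hτT _ (e0 _).1.2) (hτT _ (e0 _).1.2)
  · exact le_rfl
  · exact le_rfl

lemma gBirth_fst_le_rBirth (hτT : ∀ c ∈ τ, c ≤ T) (p : Fin n × Fin n) :
    gBirth M τ T e0 p.1 ≤ rBirth M τ T e0 p := by
  by_cases h : (p.1 : ℕ) < k0 ∧ (p.2 : ℕ) < k0
  · unfold gBirth rBirth
    rw [dif_pos h.1, dif_pos h]
    split_ifs with hd
    · exact le_max_left _ _
    · exact hτT _ (e0 _).1.2
  · unfold rBirth
    rw [dif_neg h]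
    exact gBirth_le_T e0 hτT p.1

lemma gBirth_snd_le_rBirth (hτT : ∀ c ∈ τ, c ≤ T) (p : Fin n × Fin n) :
    gBirth M τ T e0 p.2 ≤ rBirth M τ T e0 p := by
  by_cases h : (p.1 : ℕ) < k0 ∧ (p.2 : ℕ) < k0
  · unfold gBirth rBirth
    rw [dif_pos h.2, dif_pos h]
    split_ifs with hd
    · exact le_max_right _ _
    · exact hτT _ (e0 _).1.2
  · unfold rBirth
    rw [dif_neg h]
    exact gBirth_le_T e0 hτT p.2

variable (M τ T) in
/-- The full-form presentation: `n` generator strands, and one relation strand for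
every ordered pair of generator strands. -/
def fullPres (hτT : ∀ c ∈ τ, c ≤ T) : Pres n (n * n) where
  γ := gBirth M τ T e0
  ρ := fun j => rBirth M τ T e0 (finProdFinEquiv.symm j)
  f := fun j => (finProdFinEquiv.symm j).1
  g := fun j => (finProdFinEquiv.symm j).2
  hf := fun j => gBirth_fst_le_rBirth e0 hτT _
  hg := fun j => gBirth_snd_le_rBirth e0 hτT _

variable (M τ T) in
/-- The comparison map from the presented persistent set to `M`, on generators. -/
def homAux (hT : ∀ t, T ≤ t → Nonempty (M.obj t) ∧ Subsingleton (M.obj t))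
    (t : ℝ) (a : {i : Fin n // gBirth M τ T e0 i ≤ t}) : M.obj t :=
  if h : ((a.1 : Fin n) : ℕ) < k0 then
    M.map (show ((e0 ⟨((a.1 : Fin n) : ℕ), h⟩).1.1 : ℝ) ≤ t by
      have h2 := a.2
      unfold gBirth at h2
      rwa [dif_pos h] at h2) (e0 ⟨((a.1 : Fin n) : ℕ), h⟩).2
  else
    ((hT t (by
      have h2 := a.2
      unfold gBirth at h2
      rwa [dif_neg h] at h2)).1).some

lemma map_sigma_congr {g g' : Gen M τ} (h : g = g') {t : ℝ}
    (h1 : (g.1.1 : ℝ) ≤ t) (h2 : (g'.1.1 : ℝ) ≤ t) :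
    M.map h1 g.2 = M.map h2 g'.2 := by subst h; rfl

lemma homAux_eq_of_rBirth_le
    (hT : ∀ t, T ≤ t → Nonempty (M.obj t) ∧ Subsingleton (M.obj t))
    {t : ℝ} (a b : {i : Fin n // gBirth M τ T e0 i ≤ t})
    (hr : rBirth M τ T e0 (a.1, b.1) ≤ t) :
    homAux M τ T e0 hT t a = homAux M τ T e0 hT t b := by
  by_cases hTt : T ≤ t
  · exact (hT t hTt).2.allEq _ _
  · unfold rBirth at hr
    split_ifs at hr with h1 h2
    · unfold homAux
      rw [dif_pos h1.1, dif_pos h1.2]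
      rcases h2 with ⟨hle, heq⟩ | ⟨hle, heq⟩
      · rw [← heq, M.map_comp]
      · rw [← heq, M.map_comp]
    · exact absurd hr hTt
    · exact absurd hr hTt

lemma homAux_sound
    (hτT : ∀ c ∈ τ, c ≤ T)
    (hT : ∀ t, T ≤ t → Nonempty (M.obj t) ∧ Subsingleton (M.obj t))
    {t : ℝ} (a b : {i : Fin n // gBirth M τ T e0 i ≤ t})
    (hab : (fullPres M τ T e0 hτT).rel t a b) :
    homAux M τ T e0 hT t a = homAux M τ T e0 hT t b := by
  obtain ⟨j, hj, hc⟩ := hab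
  have hj' : rBirth M τ T e0 (finProdFinEquiv.symm j) ≤ t := hj
  rcases hc with ⟨h1, h2⟩ | ⟨h1, h2⟩
  · apply homAux_eq_of_rBirth_le e0 hT a b
    have hp : (finProdFinEquiv.symm j : Fin n × Fin n) = ((a.1 : Fin n), (b.1 : Fin n)) :=
      Prod.ext h1 h2
    rwa [hp] at hj'
  · apply (homAux_eq_of_rBirth_le e0 hT b a ?_).symm
    have hp : (finProdFinEquiv.symm j : Fin n × Fin n) = ((b.1 : Fin n), (a.1 : Fin n)) :=
      Prod.ext h1 h2
    rwa [hp] at hj'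

lemma fullPres_isPresentation
    (hτT : ∀ c ∈ τ, c ≤ T)
    (hemp : ∀ t : ℝ, (∀ s ∈ τ, t < s) → IsEmpty (M.obj t))
    (hbij : ∀ (s t : ℝ) (h : s ≤ t), (∀ c ∈ τ, c ≤ s ∨ t < c) →
      Function.Bijective (M.map h))
    (hT : ∀ t, T ≤ t → Nonempty (M.obj t) ∧ Subsingleton (M.obj t))
    (hn : k0 ≤ n) :
    IsPresentation (fullPres M τ T e0 hτT : Pres n (n * n)) M := by
  refine ⟨⟨fun t => Quot.lift (homAux M τ T e0 hT t)
      (fun a b hab => homAux_sound e0 hτT hT a b hab), ?_, ?_⟩⟩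
  · -- naturality
    intro s t h x
    refine Quot.inductionOn x (fun a => ?_)
    show homAux M τ T e0 hT t ⟨a.1, le_trans a.2 h⟩ = M.map h (homAux M τ T e0 hT s a)
    unfold homAux
    by_cases hk : ((a.1 : Fin n) : ℕ) < k0
    · rw [dif_pos hk, dif_pos hk, M.map_comp]
    · rw [dif_neg hk, dif_neg hk]
      have hTs : T ≤ s := by
        have h2 : gBirth M τ T e0 a.1 ≤ s := a.2
        unfold gBirth at h2
        rwa [dif_neg hk] at h2
      exact ((hT t (le_trans hTs h)).2).allEq _ _
  · -- bijectivity
    intro t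
    constructor
    · -- injective
      intro x y hab
      revert hab
      induction x using Quot.ind with | _ a =>
      induction y using Quot.ind with | _ b =>
      intro hab
      by_cases hTt : T ≤ t
      · apply Quot.sound
        refine ⟨finProdFinEquiv ((a.1 : Fin n), (b.1 : Fin n)), ?_, Or.inl ⟨?_, ?_⟩⟩
        · show rBirth M τ T e0
            (finProdFinEquiv.symm (finProdFinEquiv ((a.1 : Fin n), (b.1 : Fin n)))) ≤ t
          rw [Equiv.symm_apply_apply]
          exact le_trans (rBirth_le_T e0 hτT _) hTt
        · show (finProdFinEquiv.symm
            (finProdFinEquiv ((a.1 : Fin n), (b.1 : Fin n)))).1 = a.1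
          rw [Equiv.symm_apply_apply]
        · show (finProdFinEquiv.symm
            (finProdFinEquiv ((a.1 : Fin n), (b.1 : Fin n)))).2 = b.1
          rw [Equiv.symm_apply_apply]
      · -- t < T
        have ha : ((a.1 : Fin n) : ℕ) < k0 := by
          by_contra hcon
          have h2 : gBirth M τ T e0 a.1 ≤ t := a.2
          unfold gBirth at h2
          rw [dif_neg hcon] at h2
          exact hTt h2
        have hb : ((b.1 : Fin n) : ℕ) < k0 := by
          by_contra hcon
          have h2 : gBirth M τ T e0 b.1 ≤ t := b.2
          unfold gBirth at h2
          rw [dif_neg hcon] at h2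
          exact hTt h2
        have hab' : homAux M τ T e0 hT t a = homAux M τ T e0 hT t b := hab
        unfold homAux at hab'
        rw [dif_pos ha, dif_pos hb] at hab'
        have h1t : ((e0 ⟨((a.1 : Fin n) : ℕ), ha⟩).1.1 : ℝ) ≤ t := by
          have h2 : gBirth M τ T e0 a.1 ≤ t := a.2
          unfold gBirth at h2
          rwa [dif_pos ha] at h2
        have h2t : ((e0 ⟨((b.1 : Fin n) : ℕ), hb⟩).1.1 : ℝ) ≤ t := by
          have h2 : gBirth M τ T e0 b.1 ≤ t := b.2
          unfold gBirth at h2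
          rwa [dif_pos hb] at h2
        have hFne : (τ.filter (fun c => c ≤ t)).Nonempty :=
          ⟨_, Finset.mem_filter.2 ⟨(e0 ⟨((a.1 : Fin n) : ℕ), ha⟩).1.2, h1t⟩⟩
        set c := (τ.filter (fun c => c ≤ t)).max' hFne with hcdef
        have hcF := (τ.filter (fun c => c ≤ t)).max'_mem hFne
        have hcτ : c ∈ τ := (Finset.mem_filter.1 hcF).1
        have hct : c ≤ t := (Finset.mem_filter.1 hcF).2
        have hbt : Function.Bijective (M.map hct) := by
          refine hbij c t hct (fun c' hc' => ?_)
          by_cases h' : c' ≤ t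
          · exact Or.inl ((τ.filter (fun c => c ≤ t)).le_max' c'
              (Finset.mem_filter.2 ⟨hc', h'⟩))
          · exact Or.inr (lt_of_not_ge h')
        have hc1 : ((e0 ⟨((a.1 : Fin n) : ℕ), ha⟩).1.1 : ℝ) ≤ c :=
          (τ.filter (fun c => c ≤ t)).le_max' _
            (Finset.mem_filter.2 ⟨(e0 ⟨((a.1 : Fin n) : ℕ), ha⟩).1.2, h1t⟩)
        have hc2 : ((e0 ⟨((b.1 : Fin n) : ℕ), hb⟩).1.1 : ℝ) ≤ c :=
          (τ.filter (fun c => c ≤ t)).le_max' _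
            (Finset.mem_filter.2 ⟨(e0 ⟨((b.1 : Fin n) : ℕ), hb⟩).1.2, h2t⟩)
        have hx12 : M.map hc1 (e0 ⟨((a.1 : Fin n) : ℕ), ha⟩).2
            = M.map hc2 (e0 ⟨((b.1 : Fin n) : ℕ), hb⟩).2 := by
          apply hbt.1
          rw [M.map_comp, M.map_comp]
          exact hab'
        set g' : Gen M τ := ⟨⟨c, hcτ⟩, M.map hc1 (e0 ⟨((a.1 : Fin n) : ℕ), ha⟩).2⟩
          with hg'def
        set i' : Fin n := Fin.castLE hn (e0.symm g') with hi'def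
        have hik' : ((i' : Fin n) : ℕ) < k0 := (e0.symm g').2
        have he' : e0 ⟨((i' : Fin n) : ℕ), hik'⟩ = g' := by
          have hfin : (⟨((i' : Fin n) : ℕ), hik'⟩ : Fin k0) = e0.symm g' := Fin.ext rfl
          rw [hfin, Equiv.apply_symm_apply]
        have hγ' : gBirth M τ T e0 i' ≤ t := by
          unfold gBirth
          rw [dif_pos hik', he']
          exact hct
        have step : ∀ (u : {i : Fin n // gBirth M τ T e0 i ≤ t})
            (hu : ((u.1 : Fin n) : ℕ) < k0)
            (hcu : ((e0 ⟨((u.1 : Fin n) : ℕ), hu⟩).1.1 : ℝ) ≤ c)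
            (hut : ((e0 ⟨((u.1 : Fin n) : ℕ), hu⟩).1.1 : ℝ) ≤ t)
            (hval : M.map hcu (e0 ⟨((u.1 : Fin n) : ℕ), hu⟩).2 = g'.2),
            Quot.mk ((fullPres M τ T e0 hτT).rel t) u
              = Quot.mk ((fullPres M τ T e0 hτT).rel t) ⟨i', hγ'⟩ := by
          intro u hu hcu hut hval
          apply Quot.sound
          refine ⟨finProdFinEquiv ((u.1 : Fin n), i'), ?_, Or.inl ⟨?_, ?_⟩⟩
          · show rBirth M τ T e0
              (finProdFinEquiv.symm (finProdFinEquiv ((u.1 : Fin n), i'))) ≤ t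
            rw [Equiv.symm_apply_apply]
            unfold rBirth
            rw [dif_pos (⟨hu, hik'⟩ : ((u.1 : Fin n) : ℕ) < k0 ∧ ((i' : Fin n) : ℕ) < k0)]
            have hdrel : DRel M τ (e0 ⟨((u.1 : Fin n) : ℕ), hu⟩)
                (e0 ⟨((i' : Fin n) : ℕ), hik'⟩) := by
              rw [he']
              exact Or.inl ⟨hcu, hval⟩
            rw [if_pos hdrel]
            refine max_le hut ?_
            rw [he']
            exact hct
          · show (finProdFinEquiv.symm
              (finProdFinEquiv ((u.1 : Fin n), i'))).1 = u.1
            rw [Equiv.symm_apply_apply]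
          · show (finProdFinEquiv.symm
              (finProdFinEquiv ((u.1 : Fin n), i'))).2 = i'
            rw [Equiv.symm_apply_apply]
        have s1 := step a ha hc1 h1t rfl
        have s2 := step b hb hc2 h2t hx12.symm
        exact s1.trans s2.symm
    · -- surjective
      intro y
      have hne : ¬ (∀ s ∈ τ, t < s) := fun hs => (hemp t hs).false y
      push_neg at hne
      obtain ⟨c0, hc0τ, hc0t⟩ := hne
      have hFne : (τ.filter (fun c => c ≤ t)).Nonempty :=
        ⟨c0, Finset.mem_filter.2 ⟨hc0τ, hc0t⟩⟩
      set c := (τ.filter (fun c => c ≤ t)).max' hFne with hcdef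
      have hcF := (τ.filter (fun c => c ≤ t)).max'_mem hFne
      have hcτ : c ∈ τ := (Finset.mem_filter.1 hcF).1
      have hct : c ≤ t := (Finset.mem_filter.1 hcF).2
      have hbt : Function.Bijective (M.map hct) := by
        refine hbij c t hct (fun c' hc' => ?_)
        by_cases h' : c' ≤ t
        · exact Or.inl ((τ.filter (fun c => c ≤ t)).le_max' c'
            (Finset.mem_filter.2 ⟨hc', h'⟩))
        · exact Or.inr (lt_of_not_ge h')
      obtain ⟨x, hx⟩ := hbt.2 y
      set g0 : Gen M τ := ⟨⟨c, hcτ⟩, x⟩ with hg0def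
      set i : Fin n := Fin.castLE hn (e0.symm g0) with hidef
      have hik : ((i : Fin n) : ℕ) < k0 := (e0.symm g0).2
      have he : e0 ⟨((i : Fin n) : ℕ), hik⟩ = g0 := by
        have hfin : (⟨((i : Fin n) : ℕ), hik⟩ : Fin k0) = e0.symm g0 := Fin.ext rfl
        rw [hfin, Equiv.apply_symm_apply]
      have hγ : gBirth M τ T e0 i ≤ t := by
        unfold gBirth
        rw [dif_pos hik, he]
        exact hct
      refine ⟨Quot.mk _ ⟨i, hγ⟩, ?_⟩
      show homAux M τ T e0 hT t ⟨i, hγ⟩ = y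
      unfold homAux
      rw [dif_pos hik]
      exact (map_sigma_congr he _ hct).trans hx

end AuxFullPres

lemma exists_fullPres (M : MergeTree) :
    ∃ k0 : ℕ, ∀ n : ℕ, k0 ≤ n → ∃ P : Pres n (n * n),
      P.f = (fun j => (finProdFinEquiv.symm j).1) ∧
      P.g = (fun j => (finProdFinEquiv.symm j).2) ∧
      IsPresentation P M.toPS := by
  obtain ⟨τ, hemp, hbij⟩ := M.constructible
  obtain ⟨T0, hT0⟩ := M.eventually_one
  have hτne : τ.Nonempty := by
    rcases Finset.eq_empty_or_nonempty τ with h | h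
    · exfalso
      subst h
      exact (hemp T0 (by simp)).false (hT0 T0 le_rfl).1.some
    · exact h
  set T := max T0 (τ.max' hτne) with hTdef
  have hτT : ∀ c ∈ τ, c ≤ T := fun c hc => le_trans (τ.le_max' c hc) (le_max_right _ _)
  have hT : ∀ t, T ≤ t → Nonempty (M.toPS.obj t) ∧ Subsingleton (M.toPS.obj t) :=
    fun t ht => hT0 t (le_trans (le_max_left _ _) ht)
  haveI : ∀ c : {c : ℝ // c ∈ τ}, Fintype (M.toPS.obj c.1) :=
    fun c => @Fintype.ofFinite _ (M.finite _)
  haveI : Fintype (Gen M.toPS τ) := Sigma.instFintype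
  refine ⟨Fintype.card (Gen M.toPS τ), fun n hn => ?_⟩
  set e0 := (Fintype.equivFin (Gen M.toPS τ)).symm with he0def
  exact ⟨fullPres M.toPS τ T e0 hτT, rfl, rfl,
    fullPres_isPresentation e0 hτT hemp hbij hT hn⟩

/-- any two merge trees admit compatible presentations, i.e. presentations
with identical underlying 0-1 presentation matrices. -/
theorem compatible_presentations_exist (M N : MergeTree) :
    ∃ (k l : ℕ) (P Q : Pres k l), Compatible P Q ∧
      IsPresentation P M.toPS ∧ IsPresentation Q N.toPS := by
  obtain ⟨kM, hM⟩ := exists_fullPres M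
  obtain ⟨kN, hN⟩ := exists_fullPres N
  obtain ⟨P, hPf, hPg, hP⟩ := hM (max kM kN) (le_max_left _ _)
  obtain ⟨Q, hQf, hQg, hQ⟩ := hN (max kM kN) (le_max_right _ _)
  refine ⟨max kM kN, max kM kN * max kM kN, P, Q, ?_, hP, hQ⟩
  intro i j
  rw [hPf, hPg, hQf, hQg]
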